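/- arXiv:1610.06209 — 4 statements merged into one kernel-verified Lean document; each statement's English description precedes it below -/
import Mathlib

section
/- Let H be the L2-normalized n×n Hadamard matrix and D a diagonal matrix with i.i.d. Rademacher (±1) diagonal entries. Then for every x ∈ ℝⁿ with ‖x‖₂ = 1, P[‖HDx‖_∞ > log(n)/√n] ≤ 2n·exp(-log²(n)/8). -/
open Matrix

open MeasureTheory ProbabilityTheory

/-- The mgf of a (scaled) Rademacher random variable. -/
lemma rademacher_mgf {Ω : Type*} {mΩ : MeasurableSpace Ω} {μ : Measure Ω}
    [IsProbabilityMeasure μ] {d : Ω → ℝ} (hm : Measurable d)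
    (h1 : μ {ω | d ω = 1} = 1 / 2) (h2 : μ {ω | d ω = -1} = 1 / 2) (s : ℝ) :
    Integrable (fun ω => Real.exp (s * d ω)) μ ∧
      ∫ ω, Real.exp (s * d ω) ∂μ = Real.cosh s := by
  set A : Set Ω := {ω | d ω = 1} with hAdef
  set B : Set Ω := {ω | d ω = -1} with hBdef
  have hA : MeasurableSet A := hm (measurableSet_singleton 1)
  have hB : MeasurableSet B := hm (measurableSet_singleton (-1))
  have hdisj : Disjoint A B := by
    rw [Set.disjoint_left]
    intro ω hω1 hω2
    simp only [hAdef, hBdef, Set.mem_setOf_eq] at hω1 hω2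
    rw [hω1] at hω2; norm_num at hω2
  have hunion : μ (A ∪ B) = 1 := by
    rw [measure_union hdisj hB, h1, h2]
    rw [one_div, ENNReal.inv_two_add_inv_two]
  have hae : ∀ᵐ ω ∂μ, d ω = 1 ∨ d ω = -1 := by
    rw [MeasureTheory.ae_iff]
    have hset : {ω | ¬(d ω = 1 ∨ d ω = -1)} = (A ∪ B)ᶜ := by
      ext ω; simp [hAdef, hBdef]
    rw [hset, measure_compl (hA.union hB) (measure_ne_top _ _), hunion, measure_univ]
    simp
  set g : Ω → ℝ := fun ω =>
    A.indicator (fun _ => Real.exp s) ω + B.indicator (fun _ => Real.exp (-s)) ω with hgdef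
  have hfg : (fun ω => Real.exp (s * d ω)) =ᵐ[μ] g := by
    filter_upwards [hae] with ω hω
    rcases hω with h | h
    · have hωA : ω ∈ A := h
      have hωB : ω ∉ B := by
        simp only [hBdef, Set.mem_setOf_eq, h]; norm_num
      simp [hgdef, Set.indicator_of_mem hωA, Set.indicator_of_notMem hωB, h]
    · have hωB : ω ∈ B := h
      have hωA : ω ∉ A := by
        simp only [hAdef, Set.mem_setOf_eq, h]; norm_num
      simp [hgdef, Set.indicator_of_mem hωB, Set.indicator_of_notMem hωA, h]
  have hgint : Integrable g μ :=
    ((integrable_const _).indicator hA).add ((integrable_const _).indicator hB)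
  have hint : Integrable (fun ω => Real.exp (s * d ω)) μ := hgint.congr hfg.symm
  refine ⟨hint, ?_⟩
  rw [integral_congr_ae hfg, hgdef,
    integral_add ((integrable_const _).indicator hA) ((integrable_const _).indicator hB),
    integral_indicator hA, integral_indicator hB, setIntegral_const, setIntegral_const,
    measureReal_def, measureReal_def, h1, h2, Real.cosh_eq]
  norm_num
  ring

/-- The matrix `HD` (normalized Hadamard times a random diagonal ±1 matrix) is
`(log n, 2n·exp(-log²n/8))`-balanced. -/
theorem HD_balanced
    {Ω : Type*} {mΩ : MeasurableSpace Ω} {μ : Measure Ω} [IsProbabilityMeasure μ]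
    (n : ℕ) (hn : 0 < n) (H : Matrix (Fin n) (Fin n) ℝ)
    (hHorth : Hᵀ * H = 1)
    (hHent : ∀ i j, |H i j| = 1 / Real.sqrt n)
    (d : Fin n → Ω → ℝ)
    (hmeas : ∀ i, Measurable (d i))
    (hindep : iIndepFun d μ)
    (hdist : ∀ i, μ {ω | d i ω = 1} = 1 / 2 ∧ μ {ω | d i ω = -1} = 1 / 2)
    (x : Fin n → ℝ) (hx : ∑ i, x i ^ 2 = 1) :
    μ {ω | ∃ i, Real.log n / Real.sqrt n < |H.mulVec (fun j => d j ω * x j) i|} ≤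
      ENNReal.ofReal (2 * n * Real.exp (-(Real.log n) ^ 2 / 8)) := by
  classical
  set N : ℝ := (n : ℝ) with hNdef
  have hN : (0 : ℝ) < N := by rw [hNdef]; exact_mod_cast hn
  have hN1 : (1 : ℝ) ≤ N := by rw [hNdef]; exact_mod_cast hn
  set ε : ℝ := Real.log N / Real.sqrt N with hεdef
  have hε0 : 0 ≤ ε := div_nonneg (Real.log_nonneg hN1) (Real.sqrt_nonneg _)
  have key : ∀ i : Fin n, μ {ω | ε < |H.mulVec (fun j => d j ω * x j) i|}
      ≤ ENNReal.ofReal (2 * Real.exp (-(Real.log N) ^ 2 / 8)) := by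
    intro i
    set a : Fin n → ℝ := fun j => H i j * x j with hadef
    set Y : Fin n → Ω → ℝ := fun j ω => a j * d j ω with hYdef
    have hYmeas : ∀ j, Measurable (Y j) := fun j => (hmeas j).const_mul _
    have hYindep : iIndepFun Y μ :=
      hindep.comp (fun j y => a j * y) (fun j => measurable_const_mul _)
    have ha2 : ∑ j, (a j) ^ 2 = 1 / N := by
      have hHsq : ∀ j, (H i j) ^ 2 = 1 / N := by
        intro j
        rw [← sq_abs, hHent i j, div_pow, one_pow, Real.sq_sqrt hN.le]
      calc ∑ j, (a j) ^ 2 = ∑ j, (1 / N) * (x j) ^ 2 := by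
            refine Finset.sum_congr rfl fun j _ => ?_
            rw [hadef, mul_pow, hHsq j]
        _ = (1 / N) * ∑ j, (x j) ^ 2 := by rw [Finset.mul_sum]
        _ = 1 / N := by rw [hx, mul_one]
    have hint : ∀ (t : ℝ) (j : Fin n), Integrable (fun ω => Real.exp (t * Y j ω)) μ := by
      intro t j
      have h := (rademacher_mgf (hmeas j) (hdist j).1 (hdist j).2 (t * a j)).1
      simpa [hYdef, mul_assoc] using h
    have hmgf : ∀ (t : ℝ) (j : Fin n), mgf (Y j) μ t = Real.cosh (t * a j) := by
      intro t j
      have h := (rademacher_mgf (hmeas j) (hdist j).1 (hdist j).2 (t * a j)).2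
      rw [mgf, ← h]
      congr 1
      funext ω
      rw [hYdef]; ring_nf
    have hintS : ∀ t : ℝ, Integrable (fun ω => Real.exp (t * (∑ j, Y j) ω)) μ := fun t =>
      hYindep.integrable_exp_mul_sum hYmeas (fun j _ => hint t j)
    have hmgfS : ∀ t : ℝ, mgf (∑ j, Y j) μ t ≤ Real.exp (t ^ 2 / (2 * N)) := by
      intro t
      rw [hYindep.mgf_sum hYmeas Finset.univ]
      calc ∏ j, mgf (Y j) μ t = ∏ j, Real.cosh (t * a j) := by
            exact Finset.prod_congr rfl fun j _ => hmgf t j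
        _ ≤ ∏ j, Real.exp ((t * a j) ^ 2 / 2) :=
            Finset.prod_le_prod (fun j _ => (Real.cosh_pos _).le)
              (fun j _ => Real.cosh_le_exp_half_sq _)
        _ = Real.exp (∑ j, (t * a j) ^ 2 / 2) := (Real.exp_sum _ _).symm
        _ = Real.exp (t ^ 2 / (2 * N)) := by
            congr 1
            have h1 : ∑ j, (t * a j) ^ 2 / 2 = (t ^ 2 / 2) * ∑ j, (a j) ^ 2 := by
              rw [Finset.mul_sum]
              exact Finset.sum_congr rfl fun j _ => by ring
            rw [h1, ha2]
            field_simp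
    set t : ℝ := N * ε with htdef
    have ht0 : 0 ≤ t := mul_nonneg hN.le hε0
    have hexp : -t * ε + t ^ 2 / (2 * N) = -(Real.log N) ^ 2 / 2 := by
      have hsq : ε ^ 2 = (Real.log N) ^ 2 / N := by
        rw [hεdef, div_pow, Real.sq_sqrt hN.le]
      have h2 : N * ε ^ 2 = (Real.log N) ^ 2 := by
        rw [hsq, mul_div_cancel₀ _ hN.ne']
      have h3 : -t * ε + t ^ 2 / (2 * N) = -(N * ε ^ 2) / 2 := by
        rw [htdef]; field_simp; ring
      rw [h3, h2]
    have hup : (μ {ω | ε ≤ (∑ j, Y j) ω}).toReal ≤ Real.exp (-(Real.log N) ^ 2 / 2) := by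
      calc (μ {ω | ε ≤ (∑ j, Y j) ω}).toReal
          ≤ Real.exp (-t * ε) * mgf (∑ j, Y j) μ t :=
            measure_ge_le_exp_mul_mgf ε ht0 (hintS t)
        _ ≤ Real.exp (-t * ε) * Real.exp (t ^ 2 / (2 * N)) := by
            exact mul_le_mul_of_nonneg_left (hmgfS t) (Real.exp_pos _).le
        _ = Real.exp (-(Real.log N) ^ 2 / 2) := by rw [← Real.exp_add, hexp]
    have hlo : (μ {ω | (∑ j, Y j) ω ≤ -ε}).toReal ≤ Real.exp (-(Real.log N) ^ 2 / 2) := by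
      calc (μ {ω | (∑ j, Y j) ω ≤ -ε}).toReal
          ≤ Real.exp (-(-t) * (-ε)) * mgf (∑ j, Y j) μ (-t) :=
            measure_le_le_exp_mul_mgf (-ε) (neg_nonpos.mpr ht0) (hintS (-t))
        _ ≤ Real.exp (-t * ε) * Real.exp (t ^ 2 / (2 * N)) := by
            have h1 : -(-t) * (-ε) = -t * ε := by ring
            have h2 : (-t) ^ 2 = t ^ 2 := by ring
            rw [h1]
            have := hmgfS (-t)
            rw [h2] at this
            exact mul_le_mul_of_nonneg_left this (Real.exp_pos _).le
        _ = Real.exp (-(Real.log N) ^ 2 / 2) := by rw [← Real.exp_add, hexp]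
    have hsub : {ω | ε < |H.mulVec (fun j => d j ω * x j) i|}
        ⊆ {ω | ε ≤ (∑ j, Y j) ω} ∪ {ω | (∑ j, Y j) ω ≤ -ε} := by
      intro ω hω
      have hrepr : H.mulVec (fun j => d j ω * x j) i = (∑ j, Y j) ω := by
        rw [Matrix.mulVec, dotProduct, Finset.sum_apply]
        exact Finset.sum_congr rfl fun j _ => by rw [hYdef, hadef]; ring
      rw [Set.mem_setOf_eq, hrepr] at hω
      rcases lt_abs.mp hω with h | h
      · exact Or.inl (le_of_lt h)
      · exact Or.inr (by simpa using le_of_lt (lt_neg.mp h))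
    calc μ {ω | ε < |H.mulVec (fun j => d j ω * x j) i|}
        ≤ μ ({ω | ε ≤ (∑ j, Y j) ω} ∪ {ω | (∑ j, Y j) ω ≤ -ε}) := measure_mono hsub
      _ ≤ μ {ω | ε ≤ (∑ j, Y j) ω} + μ {ω | (∑ j, Y j) ω ≤ -ε} := measure_union_le _ _
      _ ≤ ENNReal.ofReal (Real.exp (-(Real.log N) ^ 2 / 2))
          + ENNReal.ofReal (Real.exp (-(Real.log N) ^ 2 / 2)) := by
          gcongr
          · exact (ENNReal.le_ofReal_iff_toReal_le (measure_ne_top _ _)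
              (Real.exp_pos _).le).mpr hup
          · exact (ENNReal.le_ofReal_iff_toReal_le (measure_ne_top _ _)
              (Real.exp_pos _).le).mpr hlo
      _ = ENNReal.ofReal (2 * Real.exp (-(Real.log N) ^ 2 / 2)) := by
          rw [← ENNReal.ofReal_add (Real.exp_pos _).le (Real.exp_pos _).le]
          congr 1; ring
      _ ≤ ENNReal.ofReal (2 * Real.exp (-(Real.log N) ^ 2 / 8)) := by
          apply ENNReal.ofReal_le_ofReal
          have : -(Real.log N) ^ 2 / 2 ≤ -(Real.log N) ^ 2 / 8 := by
            nlinarith [sq_nonneg (Real.log N)]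
          nlinarith [Real.exp_le_exp.mpr this, Real.exp_pos (-(Real.log N) ^ 2 / 2)]
  have hE : {ω | ∃ i, ε < |H.mulVec (fun j => d j ω * x j) i|}
      = ⋃ i, {ω | ε < |H.mulVec (fun j => d j ω * x j) i|} := by
    ext ω; simp
  rw [hE]
  calc μ (⋃ i, {ω | ε < |H.mulVec (fun j => d j ω * x j) i|})
      ≤ ∑ i, μ {ω | ε < |H.mulVec (fun j => d j ω * x j) i|} :=
        measure_iUnion_fintype_le _ _
    _ ≤ ∑ i : Fin n, ENNReal.ofReal (2 * Real.exp (-(Real.log N) ^ 2 / 8)) :=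
        Finset.sum_le_sum fun i _ => key i
    _ = (n : ENNReal) * ENNReal.ofReal (2 * Real.exp (-(Real.log N) ^ 2 / 8)) := by
        rw [Finset.sum_const, Finset.card_univ, Fintype.card_fin, nsmul_eq_mul]
    _ = ENNReal.ofReal (2 * N * Real.exp (-(Real.log N) ^ 2 / 8)) := by
        rw [← ENNReal.ofReal_natCast n, ← ENNReal.ofReal_mul (Nat.cast_nonneg n)]
        congr 1; rw [hNdef]; ring
end

section
/- Let H be the L2-normalized n×n Hadamard matrix (all entries ±1/√n, orthonormal rows and columns). For each i ∈ {1,...,n} define Wⁱ ∈ ℝ^{n×n} by Wⁱ_{a,b} = √n · h_{i,a} · h_{a,b}. Then for all i, j: ‖(Wʲ)ᵀ Wⁱ‖_F² ≤ n. In particular, ‖(Wʲ)ᵀWⁱ‖_F² = Σ_{l,t} (Σ_k n·h_{j,k}h_{k,l}h_{i,k}h_{k,t})² = n. -/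
open Matrix

/-- For the normalized Hadamard matrix `H` and `Wⁱ_{a,b} = √n·h_{i,a}·h_{a,b}`, the
squared Frobenius norm of `(Wʲ)ᵀWⁱ` is at most `n`, and in fact equals `n`. -/
theorem W_frobenius_norm (n : ℕ) (H : Matrix (Fin n) (Fin n) ℝ)
    (hHorth : Hᵀ * H = 1) (hHorth' : H * Hᵀ = 1)
    (hHent : ∀ a b, |H a b| = 1 / Real.sqrt n)
    (W : Fin n → Matrix (Fin n) (Fin n) ℝ)
    (hW : ∀ i a b, W i a b = Real.sqrt n * H i a * H a b)
    (i j : Fin n) :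
    (∑ l, ∑ t, (∑ k, W j k l * W i k t) ^ 2 ≤ (n : ℝ)) ∧
    ∑ l, ∑ t, (∑ k, (n : ℝ) * H j k * H k l * H i k * H k t) ^ 2 = (n : ℝ) := by
  have hsq : ∀ a b, H a b ^ 2 = 1 / n := by
    intro a b
    have h1 : H a b ^ 2 = (1 / Real.sqrt n) ^ 2 := by rw [← hHent a b, sq_abs]
    rw [h1, div_pow, one_pow, Real.sq_sqrt (Nat.cast_nonneg n)]
  set d : Fin n → ℝ := fun k => (n : ℝ) * H j k * H i k with hd
  set M : Matrix (Fin n) (Fin n) ℝ := Hᵀ * Matrix.diagonal d * H with hMdef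
  have hM : ∀ l t, M l t = ∑ k, (n : ℝ) * H j k * H k l * H i k * H k t := by
    intro l t
    simp only [hMdef, Matrix.mul_apply, Matrix.mul_diagonal, Matrix.transpose_apply, hd,
      Matrix.diagonal_apply, mul_ite, ite_mul, mul_zero, zero_mul, Finset.sum_ite_eq, Finset.sum_ite_eq',
      Finset.mem_univ, if_true]
    exact Finset.sum_congr rfl fun k _ => by ring
  have key : ∑ l, ∑ t, (∑ k, (n : ℝ) * H j k * H k l * H i k * H k t) ^ 2 = (n : ℝ) := by
    have h1 : ∑ l, ∑ t, (∑ k, (n : ℝ) * H j k * H k l * H i k * H k t) ^ 2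
        = Matrix.trace (M * Mᵀ) := by
      simp only [Matrix.trace, Matrix.diag, Matrix.mul_apply, Matrix.transpose_apply]
      refine Finset.sum_congr rfl fun l _ => Finset.sum_congr rfl fun t _ => ?_
      rw [hM, sq]
    rw [h1]
    have hMT : Mᵀ = Hᵀ * Matrix.diagonal d * H := by
      simp [hMdef, Matrix.transpose_mul, Matrix.diagonal_transpose, Matrix.mul_assoc]
    have h2 : M * Mᵀ = Hᵀ * (Matrix.diagonal d * Matrix.diagonal d) * H := by
      rw [hMT, hMdef]
      calc Hᵀ * Matrix.diagonal d * H * (Hᵀ * Matrix.diagonal d * H)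
          = Hᵀ * Matrix.diagonal d * (H * Hᵀ) * (Matrix.diagonal d * H) := by
            simp only [Matrix.mul_assoc]
        _ = Hᵀ * (Matrix.diagonal d * Matrix.diagonal d) * H := by
            rw [hHorth']
            simp only [Matrix.mul_one, Matrix.mul_assoc]
    rw [h2, Matrix.trace_mul_comm, ← Matrix.mul_assoc, hHorth', Matrix.one_mul,
      Matrix.diagonal_mul_diagonal, Matrix.trace_diagonal]
    rcases Nat.eq_zero_or_pos n with hn | hn
    · subst hn; simp
    · have hn' : (n : ℝ) ≠ 0 := Nat.cast_ne_zero.mpr hn.ne'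
      have : ∀ k : Fin n, d k * d k = 1 := by
        intro k
        have h1 := hsq j k
        have h2 := hsq i k
        have : d k * d k = (n : ℝ) ^ 2 * (H j k ^ 2 * H i k ^ 2) := by simp [hd]; ring
        rw [this, h1, h2]
        field_simp
      rw [Finset.sum_congr rfl fun k _ => this k]
      simp
  refine ⟨le_of_eq ?_, key⟩
  rw [← key]
  refine Finset.sum_congr rfl fun l _ => Finset.sum_congr rfl fun t _ => ?_
  congr 1
  refine Finset.sum_congr rfl fun k _ => ?_
  rw [hW, hW]
  have : Real.sqrt n * Real.sqrt n = (n : ℝ) := Real.mul_self_sqrt (Nat.cast_nonneg n)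
  linear_combination H j k * H k l * H i k * H k t * this
end

section
/- Let B ∈ ℝ^{N×N} be a symmetric matrix with B_{i,i} = 1 for all i and |B_{i,j}| ≤ t for all i ≠ j, where 0 < t ≤ 1/(N-1). Then det(B) ≥ (1 - t(N-1))·(1+t)^{N-1} ≥ 0; in particular if t = 1/N then det(B) > 0 and B is invertible. -/
open Matrix

lemma log_one_sub_le {u : ℝ} (h0 : 0 ≤ u) (h1 : u < 1) :
    Real.log (1 - u) ≤ -u - u^2/2 := by
  set f : ℝ → ℝ := fun x => -x - x^2/2 - Real.log (1-x) with hf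
  have hder : ∀ x : ℝ, x < 1 → HasDerivAt f (-1 - x + 1/(1-x)) x := by
    intro x hx
    have h1x : (1:ℝ) - x ≠ 0 := by linarith
    have d1 : HasDerivAt (fun y : ℝ => 1 - y) (-1) x := by
      simpa using (hasDerivAt_id x).const_sub 1
    have d2 : HasDerivAt (fun y : ℝ => Real.log (1-y)) (-1/(1-x)) x := d1.log h1x
    have d3 : HasDerivAt (fun y : ℝ => -y - y^2/2) (-1 - x) x := by
      have : HasDerivAt (fun y : ℝ => y^2/2) x x := by
        simpa using ((hasDerivAt_pow 2 x).div_const 2)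
      exact ((hasDerivAt_id' x).neg.sub this)
    have := d3.sub d2
    refine this.congr_deriv ?_
    ring
  have hmono : MonotoneOn f (Set.Icc 0 u) := by
    apply monotoneOn_of_deriv_nonneg (convex_Icc 0 u)
    · intro x hx
      exact ((hder x (lt_of_le_of_lt hx.2 h1)).continuousAt).continuousWithinAt
    · intro x hx
      rw [interior_Icc] at hx
      exact ((hder x (lt_of_lt_of_le hx.2 h1.le)).differentiableAt).differentiableWithinAt
    · intro x hx
      rw [interior_Icc] at hx
      rw [(hder x (lt_of_lt_of_le hx.2 h1.le)).deriv]
      have hx1 : (0:ℝ) < 1 - x := by linarith [hx.2, h1]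
      rw [← sub_nonneg]
      have : -1 - x + 1/(1-x) - 0 = x^2/(1-x) := by field_simp; ring
      rw [sub_zero] at this ⊢
      rw [this]
      positivity
  have h0u : (0:ℝ) ∈ Set.Icc (0:ℝ) u := ⟨le_refl _, h0⟩
  have huu : u ∈ Set.Icc (0:ℝ) u := ⟨h0, le_refl _⟩
  have := hmono h0u huu h0
  simp only [hf] at this
  simp at this
  linarith

lemma core_log_quad {u : ℝ} (h0 : 0 < u) (h1 : u < 1) {y : ℝ} (hy : -u ≤ y) :
    y + ((Real.log (1-u) + u)/u^2) * y^2 ≤ Real.log (1+y) := by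
  set D : ℝ := (Real.log (1-u) + u)/u^2 with hDdef
  have hu2 : (0:ℝ) < u^2 := by positivity
  have hD : D ≤ -(1/2) := by
    rw [hDdef, div_le_iff₀ hu2]
    have := log_one_sub_le h0.le h1
    nlinarith
  set g : ℝ → ℝ := fun z => Real.log (1+z) - z - D*z^2 with hg
  set r : ℝ → ℝ := fun z => -(1/(1+z)) - 2*D with hr
  have hder : ∀ z : ℝ, -1 < z → HasDerivAt g (z * r z) z := by
    intro z hz
    have h1z : (1:ℝ) + z ≠ 0 := by linarith
    have d1 : HasDerivAt (fun y : ℝ => 1 + y) 1 z := by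
      simpa using (hasDerivAt_id z).const_add 1
    have d2 : HasDerivAt (fun y : ℝ => Real.log (1+y)) (1/(1+z)) z := d1.log h1z
    have d3 : HasDerivAt (fun y : ℝ => y) 1 z := hasDerivAt_id z
    have d4 : HasDerivAt (fun y : ℝ => D*y^2) (D*(2*z)) z := by
      simpa using (hasDerivAt_pow 2 z).const_mul D
    have := (d2.sub d3).sub d4
    refine this.congr_deriv ?_
    simp only [hr]
    field_simp
    ring
  have hrmono : ∀ a b : ℝ, -1 < a → a ≤ b → r a ≤ r b := by
    intro a b ha hab
    simp only [hr]
    have h1a : (0:ℝ) < 1 + a := by linarith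
    have h1b : (0:ℝ) < 1 + b := by linarith
    have : 1/(1+b) ≤ 1/(1+a) := by
      apply one_div_le_one_div_of_le h1a; linarith
    linarith
  have hr0 : 0 ≤ r 0 := by
    simp only [hr]; norm_num; linarith
  have hu1 : (-1:ℝ) < -u := by linarith
  have hy1 : (-1:ℝ) < y := lt_of_lt_of_le hu1 hy
  have hg0 : g 0 = 0 := by simp [hg]
  have hgu : g (-u) = 0 := by
    simp only [hg, hDdef]
    have : (1:ℝ) + -u = 1 - u := by ring
    rw [this]
    field_simp
    ring
  -- show 0 ≤ g y
  have key : 0 ≤ g y := by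
    rcases le_or_gt 0 y with hy0 | hy0
    · -- monotone on [0, y]
      have hmono : MonotoneOn g (Set.Icc 0 y) := by
        apply monotoneOn_of_deriv_nonneg (convex_Icc 0 y)
        · intro x hx
          exact ((hder x (by linarith [hx.1])).continuousAt).continuousWithinAt
        · intro x hx
          rw [interior_Icc] at hx
          exact ((hder x (by linarith [hx.1])).differentiableAt).differentiableWithinAt
        · intro x hx
          rw [interior_Icc] at hx
          rw [(hder x (by linarith [hx.1])).deriv]
          have := hrmono 0 x (by norm_num) hx.1.le
          have hx0 : 0 ≤ x := hx.1.le
          nlinarith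
      have := hmono ⟨le_refl _, hy0⟩ ⟨hy0, le_refl _⟩ hy0
      rw [hg0] at this; exact this
    · rcases le_or_gt (r y) 0 with hry | hry
      · -- monotone on [-u, y], g y ≥ g(-u) = 0
        have hmono : MonotoneOn g (Set.Icc (-u) y) := by
          apply monotoneOn_of_deriv_nonneg (convex_Icc (-u) y)
          · intro x hx
            exact ((hder x (by linarith [hx.1])).continuousAt).continuousWithinAt
          · intro x hx
            rw [interior_Icc] at hx
            exact ((hder x (by linarith [hx.1])).differentiableAt).differentiableWithinAt
          · intro x hx
            rw [interior_Icc] at hx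
            rw [(hder x (by linarith [hx.1])).deriv]
            have h1 : r x ≤ r y := hrmono x y (by linarith [hx.1]) hx.2.le
            have h2 : r x ≤ 0 := le_trans h1 hry
            have h3 : x < 0 := lt_trans hx.2 hy0
            nlinarith
        have := hmono ⟨le_refl _, hy⟩ ⟨hy, le_refl _⟩ hy
        rw [hgu] at this; exact this
      · -- antitone on [y, 0], g y ≥ g 0 = 0
        have hanti : AntitoneOn g (Set.Icc y 0) := by
          apply antitoneOn_of_deriv_nonpos (convex_Icc y 0)
          · intro x hx
            exact ((hder x (by linarith [hx.1])).continuousAt).continuousWithinAt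
          · intro x hx
            rw [interior_Icc] at hx
            exact ((hder x (by linarith [hx.1])).differentiableAt).differentiableWithinAt
          · intro x hx
            rw [interior_Icc] at hx
            rw [(hder x (by linarith [hx.1])).deriv]
            have h1 : r y ≤ r x := hrmono y x hy1 hx.1.le
            have h2 : 0 ≤ r x := le_trans hry.le h1
            have h3 : x ≤ 0 := hx.2.le
            nlinarith
        have := hanti ⟨le_refl _, hy0.le⟩ ⟨hy0.le, le_refl _⟩ hy0.le
        rw [hg0] at this; exact this
  simp only [hg] at key
  linarith

lemma prod_lower {N : ℕ} (hN : 1 ≤ N) {t s : ℝ} (ht : 0 < t) (hs : s = ((N:ℝ)-1)*t)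
    (hs1 : s < 1) (μ : Fin N → ℝ) (hμ : ∀ i, -s ≤ μ i) (hsum : ∑ i, μ i = 0)
    (hsq : ∑ i, (μ i)^2 ≤ (N:ℝ)*t*s) :
    (1-s)*(1+t)^(N-1) ≤ ∏ i, (1 + μ i) := by
  have hNR : (1:ℝ) ≤ (N:ℝ) := by exact_mod_cast hN
  have hs0 : 0 ≤ s := by rw [hs]; nlinarith
  have h1t : (0:ℝ) < 1 + t := by linarith
  have hst : s + t = (N:ℝ)*t := by rw [hs]; ring
  set u : ℝ := (N:ℝ)*t/(1+t) with hu
  have h0u : 0 < u := by positivity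
  have h1u : u < 1 := by
    rw [hu, div_lt_one h1t]; linarith [hst]
  set D : ℝ := (Real.log (1-u) + u)/u^2 with hD
  have hDle : D ≤ -(1/2) := by
    rw [hD, div_le_iff₀ (by positivity)]
    have := log_one_sub_le h0u.le h1u
    nlinarith
  set y : Fin N → ℝ := fun i => (μ i - t)/(1+t) with hy
  have hyu : ∀ i, -u ≤ y i := by
    intro i
    have hyi : y i = (μ i - t)/(1+t) := rfl
    rw [hyi, hu, ← neg_div, div_le_div_iff₀ h1t h1t]
    nlinarith [hμ i, hst]
  have hμpos : ∀ i, 0 < 1 + μ i := by intro i; have := hμ i; linarith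
  have hkey : ∀ i, Real.log (1+t) + y i + D * (y i)^2 ≤ Real.log (1 + μ i) := by
    intro i
    have h := core_log_quad h0u h1u (hyu i)
    have h1y : 1 + y i = (1 + μ i)/(1+t) := by
      have hyi : y i = (μ i - t)/(1+t) := rfl
      rw [hyi]; field_simp
      ring
    have hlog : Real.log (1 + y i) = Real.log (1 + μ i) - Real.log (1+t) := by
      rw [h1y, Real.log_div (hμpos i).ne' h1t.ne']
    rw [hlog] at h
    rw [← hD] at h
    linarith
  have hsumy : ∑ i, y i = -u := by
    have h1 : ∑ i, y i = ((∑ i, μ i) - (N:ℝ)*t)/(1+t) := by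
      simp only [hy]
      rw [← Finset.sum_div, Finset.sum_sub_distrib, Finset.sum_const]
      simp [Finset.card_univ]
    rw [h1, hsum, hu]
    ring
  have hNt2 : ((N:ℝ)*t)^2 = (N:ℝ)*t*s + ((N:ℝ)*t)*t := by rw [← hst]; ring
  have hsumy2 : ∑ i, (y i)^2 ≤ u^2 := by
    have hpt : ∀ i, (y i)^2 = (μ i - t)^2/(1+t)^2 := by
      intro i
      have hyi : y i = (μ i - t)/(1+t) := rfl
      rw [hyi, div_pow]
    simp_rw [hpt]
    rw [← Finset.sum_div, hu, div_pow, div_le_div_iff₀ (by positivity) (by positivity)]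
    have hexp : ∑ i, (μ i - t)^2 = ∑ i, (μ i)^2 - 2*t*(∑ i, μ i) + (N:ℝ)*t^2 := by
      have h : ∀ i : Fin N, (μ i - t)^2 = (μ i)^2 - 2*t*(μ i) + t^2 := fun i => by ring
      simp_rw [h]
      rw [Finset.sum_add_distrib, Finset.sum_sub_distrib, ← Finset.mul_sum, Finset.sum_const]
      simp [Finset.card_univ]
    rw [hexp, hsum]
    nlinarith [mul_nonneg (sub_nonneg.mpr hsq) (sq_nonneg ((1:ℝ)+t))]
  have hlogsum : (N:ℝ)*Real.log (1+t) + Real.log (1-u) ≤ ∑ i, Real.log (1 + μ i) := by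
    have h1 : ∑ i, (Real.log (1+t) + y i + D * (y i)^2) ≤ ∑ i, Real.log (1 + μ i) :=
      Finset.sum_le_sum (fun i _ => hkey i)
    have h2 : ∑ i, (Real.log (1+t) + y i + D * (y i)^2)
        = (N:ℝ)*Real.log (1+t) + (∑ i, y i) + D * ∑ i, (y i)^2 := by
      rw [Finset.sum_add_distrib, Finset.sum_add_distrib, Finset.sum_const, ← Finset.mul_sum]
      simp [Finset.card_univ]
    have h3 : D * u^2 ≤ D * ∑ i, (y i)^2 := by
      apply mul_le_mul_of_nonpos_left hsumy2 (by linarith)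
    have h4 : D * u^2 = Real.log (1-u) + u := by
      rw [hD]; field_simp
    rw [h2, hsumy] at h1
    linarith
  have hprod : ∏ i, (1 + μ i) = Real.exp (∑ i, Real.log (1 + μ i)) := by
    rw [Real.exp_sum]
    exact Finset.prod_congr rfl (fun i _ => (Real.exp_log (hμpos i)).symm)
  rw [hprod]
  have hrhs : (1-s)*(1+t)^(N-1) = Real.exp ((N:ℝ)*Real.log (1+t) + Real.log (1-u)) := by
    rw [Real.exp_add]
    have e1 : Real.exp ((N:ℝ)*Real.log (1+t)) = (1+t)^N := by
      rw [Real.exp_nat_mul, Real.exp_log h1t]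
    have e2 : Real.exp (Real.log (1-u)) = 1 - u := Real.exp_log (by linarith)
    rw [e1, e2]
    have e3 : 1 - u = (1-s)/(1+t) := by
      rw [hu]
      field_simp
      linarith [hst]
    have e4 : (1+t)^N = (1+t)^(N-1) * (1+t) := by
      rw [← pow_succ, Nat.sub_add_cancel hN]
    rw [e3, e4]
    field_simp
  rw [hrhs]
  exact Real.exp_le_exp.mpr hlogsum

lemma trace_facts {N : ℕ} (B : Matrix (Fin N) (Fin N) ℝ) (hB : B.IsHermitian) :
    (∑ i, hB.eigenvalues i = B.trace) ∧ (∑ i, (hB.eigenvalues i)^2 = (B*B).trace) := by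
  have hspec := hB.spectral_theorem
  set U : Matrix (Fin N) (Fin N) ℝ := (hB.eigenvectorUnitary : Matrix (Fin N) (Fin N) ℝ) with hU
  have hUU : star U * U = 1 := (Matrix.mem_unitaryGroup_iff').mp (hB.eigenvectorUnitary).2
  set d : Fin N → ℝ := hB.eigenvalues with hd
  simp only [RCLike.ofReal_real_eq_id, Function.id_comp, Unitary.conjStarAlgAut_apply] at hspec
  constructor
  · rw [hspec, Matrix.trace_mul_comm, ← mul_assoc, hUU, one_mul, trace_diagonal]
  · have h2 : B * B = U * diagonal d * (diagonal d * star U) := by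
      rw [hspec]
      have : U * diagonal d * star U * (U * diagonal d * star U)
          = U * diagonal d * (star U * U * (diagonal d * star U)) := by
        simp only [mul_assoc]
      rw [this, hUU, one_mul]
    rw [h2, Matrix.trace_mul_comm, ← mul_assoc,
      mul_assoc (diagonal d) (star U) U, hUU, mul_one, diagonal_mul_diagonal, trace_diagonal]
    simp [sq]

lemma quad_lb {N : ℕ} {t : ℝ} (ht : 0 ≤ t) (B : Matrix (Fin N) (Fin N) ℝ)
    (hdiag : ∀ i, B i i = 1) (hoff : ∀ i j, i ≠ j → |B i j| ≤ t) (x : Fin N → ℝ) :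
    (1 - ((N:ℝ)-1)*t) * (∑ i, (x i)^2) ≤ x ⬝ᵥ (B *ᵥ x) := by
  classical
  set S1 := ∑ i, (x i)^2 with hS1def
  set A := ∑ i, |x i| with hAdef
  have hS1 : 0 ≤ S1 := Finset.sum_nonneg fun i _ => sq_nonneg _
  have hA2 : A^2 ≤ (N:ℝ) * S1 := by
    have h := sq_sum_le_card_mul_sum_sq (s := Finset.univ) (f := fun i : Fin N => |x i|)
    simp only [Finset.card_univ, Fintype.card_fin, sq_abs] at h
    exact_mod_cast h
  have hexpand : x ⬝ᵥ (B *ᵥ x) = ∑ i, ∑ j, x i * B i j * x j := by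
    simp [dotProduct, mulVec, Finset.mul_sum, mul_assoc]
  have hsplit : ∀ i : Fin N, ∑ j, x i * B i j * x j
      = (x i)^2 + ∑ j ∈ Finset.univ.erase i, x i * B i j * x j := by
    intro i
    rw [← Finset.add_sum_erase _ _ (Finset.mem_univ i), hdiag i]
    ring_nf
  have hterm : ∀ i : Fin N, ∀ j ∈ Finset.univ.erase i,
      -(t * (|x i| * |x j|)) ≤ x i * B i j * x j := by
    intro i j hj
    have hij : i ≠ j := (Finset.ne_of_mem_erase hj).symm
    have h1 : |x i * B i j * x j| ≤ t * (|x i| * |x j|) := by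
      rw [abs_mul, abs_mul]
      have h2 := hoff i j hij
      have h3 := mul_le_mul_of_nonneg_right (mul_le_mul_of_nonneg_left h2 (abs_nonneg (x i)))
        (abs_nonneg (x j))
      nlinarith
    linarith [neg_abs_le (x i * B i j * x j)]
  have hsum_off : ∀ i : Fin N, ∑ j ∈ Finset.univ.erase i, (t * (|x i| * |x j|))
      = t * (|x i| * (A - |x i|)) := by
    intro i
    have he : ∑ j ∈ Finset.univ.erase i, |x j| = A - |x i| := by
      have := Finset.add_sum_erase Finset.univ (fun j => |x j|) (Finset.mem_univ i)
      rw [hAdef]; linarith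
    rw [← Finset.mul_sum, ← Finset.mul_sum, he]
  have hbound : ∑ i, (-(t * (|x i| * (A - |x i|)))) ≤ ∑ i, ∑ j ∈ Finset.univ.erase i,
      x i * B i j * x j := by
    apply Finset.sum_le_sum
    intro i _
    rw [← hsum_off i, ← Finset.sum_neg_distrib]
    exact Finset.sum_le_sum (fun j hj => hterm i j hj)
  have hsum_neg : ∑ i, (-(t * (|x i| * (A - |x i|)))) = -(t * (A^2 - S1)) := by
    have : ∀ i : Fin N, -(t * (|x i| * (A - |x i|))) = -(t * (|x i| * A)) + t * (x i)^2 := by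
      intro i
      have := sq_abs (x i)
      nlinarith [sq_abs (x i)]
    simp_rw [this]
    rw [Finset.sum_add_distrib]
    have e1 : ∑ i : Fin N, -(t * (|x i| * A)) = -(t * A^2) := by
      rw [Finset.sum_neg_distrib, ← Finset.mul_sum, ← Finset.sum_mul, ← hAdef]
      ring
    have e2 : ∑ i : Fin N, t * (x i)^2 = t * S1 := by
      rw [← Finset.mul_sum, ← hS1def]
    rw [e1, e2]
    ring
  have htotal : S1 - t*(A^2 - S1) ≤ x ⬝ᵥ (B *ᵥ x) := by
    rw [hexpand]
    have h2 : ∑ i, ∑ j, x i * B i j * x j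
        = S1 + ∑ i, ∑ j ∈ Finset.univ.erase i, x i * B i j * x j := by
      simp_rw [hsplit]
      rw [Finset.sum_add_distrib]
    rw [h2]
    rw [hsum_neg] at hbound
    linarith
  have hfin : t * A^2 ≤ t * ((N:ℝ) * S1) := mul_le_mul_of_nonneg_left hA2 ht
  nlinarith

lemma eig_lb {N : ℕ} {t : ℝ} (ht : 0 ≤ t) (B : Matrix (Fin N) (Fin N) ℝ)
    (hB : B.IsHermitian)
    (hdiag : ∀ i, B i i = 1) (hoff : ∀ i j, i ≠ j → |B i j| ≤ t) (i : Fin N) :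
    1 - ((N:ℝ)-1)*t ≤ hB.eigenvalues i := by
  set v : Fin N → ℝ := ⇑(hB.eigenvectorBasis i) with hv
  have hnorm : ∑ j, (v j)^2 = 1 := by
    have h := hB.eigenvectorBasis.orthonormal.1 i
    rw [EuclideanSpace.norm_eq] at h
    have h2 := congrArg (· ^ 2) h
    simp only [one_pow] at h2
    rw [Real.sq_sqrt (Finset.sum_nonneg fun j _ => sq_nonneg _)] at h2
    simpa [Real.norm_eq_abs, sq_abs] using h2
  have heig : hB.eigenvalues i = v ⬝ᵥ (B *ᵥ v) := by
    have h := hB.eigenvalues_eq i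
    simpa using h
  have := quad_lb ht B hdiag hoff v
  rw [hnorm] at this
  rw [heig]
  linarith

/-- Determinant lower bound for a symmetric matrix with unit diagonal and off-diagonal
entries of absolute value at most `t ≤ 1/(N-1)`:
`det(B) ≥ (1 - t(N-1))(1+t)^{N-1} ≥ 0`, and if `t = 1/N` then `det(B) > 0` and `B`
is invertible. -/
theorem near_identity_det_lower_bound (N : ℕ) (hN : 1 < N) (t : ℝ) (ht : 0 < t)
    (ht' : t ≤ 1 / ((N : ℝ) - 1))
    (B : Matrix (Fin N) (Fin N) ℝ) (hsymm : Bᵀ = B)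
    (hdiag : ∀ i, B i i = 1) (hoff : ∀ i j, i ≠ j → |B i j| ≤ t) :
    (1 - t * ((N : ℝ) - 1)) * (1 + t) ^ (N - 1) ≤ B.det ∧
    0 ≤ (1 - t * ((N : ℝ) - 1)) * (1 + t) ^ (N - 1) ∧
    (t = 1 / (N : ℝ) → 0 < B.det ∧ IsUnit B) := by
  have hB : B.IsHermitian := (Matrix.conjTranspose_eq_transpose_of_trivial B).trans hsymm
  have hN1 : (1:ℝ) < (N:ℝ) := by exact_mod_cast hN
  have hNpos : (0:ℝ) < (N:ℝ) - 1 := by linarith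
  set s : ℝ := ((N:ℝ)-1)*t with hsdef
  have hs0 : 0 < s := by positivity
  have hs1 : s ≤ 1 := by
    rw [hsdef]
    rw [le_div_iff₀ hNpos] at ht'
    linarith
  set lam : Fin N → ℝ := hB.eigenvalues with hlam
  have hlam_lb : ∀ i, 1 - s ≤ lam i := by
    intro i
    have := eig_lb ht.le B hB hdiag hoff i
    rw [hsdef]; linarith
  have hlam_nonneg : ∀ i, 0 ≤ lam i := fun i => by linarith [hlam_lb i]
  have htr := (trace_facts B hB).1
  have htr2 := (trace_facts B hB).2
  have htraceB : B.trace = (N:ℝ) := by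
    rw [Matrix.trace]
    simp only [Matrix.diag_apply, hdiag]
    simp [Finset.card_univ]
  have htraceB2 : (B*B).trace ≤ (N:ℝ) * (1 + ((N:ℝ)-1)*t^2) := by
    rw [Matrix.trace]
    have hrow : ∀ i : Fin N, (B*B) i i ≤ 1 + ((N:ℝ)-1)*t^2 := by
      intro i
      have hmul : (B*B) i i = ∑ j, (B i j)^2 := by
        rw [Matrix.mul_apply]
        apply Finset.sum_congr rfl
        intro j _
        have : B j i = B i j := congrFun (congrFun hsymm i) j
        rw [this, sq]
      rw [hmul, ← Finset.add_sum_erase _ _ (Finset.mem_univ i), hdiag i, one_pow]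
      have hbd : ∑ j ∈ Finset.univ.erase i, (B i j)^2 ≤ ((N:ℝ)-1)*t^2 := by
        have h1 : ∀ j ∈ Finset.univ.erase i, (B i j)^2 ≤ t^2 := by
          intro j hj
          have hij : i ≠ j := (Finset.ne_of_mem_erase hj).symm
          have := hoff i j hij
          nlinarith [abs_nonneg (B i j), sq_abs (B i j), neg_abs_le (B i j)]
        have h2 := Finset.sum_le_card_nsmul _ _ _ h1
        have hcard : (Finset.univ.erase i).card = N - 1 := by
          rw [Finset.card_erase_of_mem (Finset.mem_univ i), Finset.card_univ, Fintype.card_fin]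
        rw [hcard] at h2
        have : ((N-1 : ℕ):ℝ) = (N:ℝ) - 1 := by
          have : 1 ≤ N := hN.le
          push_cast [Nat.cast_sub this]
          ring
        calc ∑ j ∈ Finset.univ.erase i, (B i j)^2 ≤ (N-1 : ℕ) • t^2 := h2
          _ = ((N-1:ℕ):ℝ) * t^2 := by rw [nsmul_eq_mul]
          _ = ((N:ℝ)-1) * t^2 := by rw [this]
      linarith
    calc ∑ i, (B*B).diag i ≤ ∑ _i : Fin N, (1 + ((N:ℝ)-1)*t^2) :=
          Finset.sum_le_sum (fun i _ => hrow i)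
      _ = (N:ℝ) * (1 + ((N:ℝ)-1)*t^2) := by
          rw [Finset.sum_const, Finset.card_univ, Fintype.card_fin, nsmul_eq_mul]
  have hdet : B.det = ∏ i, lam i := by
    have h := hB.det_eq_prod_eigenvalues
    simpa using h
  set μ : Fin N → ℝ := fun i => lam i - 1 with hμdef
  have hμ : ∀ i, -s ≤ μ i := fun i => by
    have := hlam_lb i; simp only [hμdef]; linarith
  have hsum : ∑ i, μ i = 0 := by
    simp only [hμdef]
    rw [Finset.sum_sub_distrib, htr, htraceB, Finset.sum_const, Finset.card_univ,
      Fintype.card_fin, nsmul_eq_mul, mul_one, sub_self]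
  have hsq : ∑ i, (μ i)^2 ≤ (N:ℝ)*t*s := by
    have hexp : ∑ i, (μ i)^2 = ∑ i, (lam i)^2 - 2*(∑ i, lam i) + (N:ℝ) := by
      have h : ∀ i : Fin N, (μ i)^2 = (lam i)^2 - 2*(lam i) + 1 := fun i => by
        simp only [hμdef]; ring
      simp_rw [h]
      rw [Finset.sum_add_distrib, Finset.sum_sub_distrib, ← Finset.mul_sum, Finset.sum_const,
        Finset.card_univ, Fintype.card_fin, nsmul_eq_mul, mul_one]
    rw [hexp, htr2, htr, htraceB]
    have : (N:ℝ)*t*s = (N:ℝ)*(((N:ℝ)-1)*t^2) := by rw [hsdef]; ring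
    rw [this]
    nlinarith [htraceB2]
  have hprodμ : ∏ i, (1 + μ i) = B.det := by
    rw [hdet]
    apply Finset.prod_congr rfl
    intro i _
    simp only [hμdef]; ring
  have hmain : s < 1 → (1-s)*(1+t)^(N-1) ≤ B.det := by
    intro hslt
    rw [← hprodμ]
    exact prod_lower hN.le ht hsdef hslt μ hμ hsum hsq
  have hcomm : 1 - t * ((N:ℝ)-1) = 1 - s := by rw [hsdef]; ring
  refine ⟨?_, ?_, ?_⟩
  · rcases lt_or_eq_of_le hs1 with hslt | hseq
    · rw [hcomm]; exact hmain hslt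
    · rw [hcomm, ← hseq, sub_self, zero_mul, hdet]
      exact Finset.prod_nonneg (fun i _ => hlam_nonneg i)
  · rw [hcomm]
    have h1 : 0 ≤ 1 - s := by linarith
    positivity
  · intro htN
    have hslt : s < 1 := by
      rw [hsdef, htN]
      rw [mul_one_div, div_lt_one (by linarith : (0:ℝ) < (N:ℝ))]
      linarith
    have hpos : 0 < (1-s)*(1+t)^(N-1) := by
      have h1 : 0 < 1 - s := by linarith
      positivity
    have hdetpos : 0 < B.det := lt_of_lt_of_le hpos (hmain hslt)
    exact ⟨hdetpos, (Matrix.isUnit_iff_isUnit_det B).mpr (isUnit_iff_ne_zero.mpr hdetpos.ne')⟩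
end

section
/- Let Z_ε be a centered Gaussian vector in ℝᵏ with covariance matrix I + E, where E has zero diagonal and all entries of absolute value at most ε, and let Z be a standard Gaussian vector in ℝᵏ. Then for every measurable convex set Y ⊆ ℝᵏ, |P[Z_ε ∈ Y] − P[Z ∈ Y]| = O(ε) as ε → 0 (with constant depending only on k). -/
open Matrix

open MeasureTheory

/-- Density of a centered Gaussian on `ℝᵏ` with covariance matrix `S`. -/
noncomputable def gaussDensity (k : ℕ) (S : Matrix (Fin k) (Fin k) ℝ)
    (x : EuclideanSpace ℝ (Fin k)) : ℝ :=
  (Real.sqrt ((2 * Real.pi) ^ k * S.det))⁻¹ *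
    Real.exp (-(∑ i, ∑ j, x i * S⁻¹ i j * x j) / 2)

lemma norm_sq_sum {k : ℕ} (x : EuclideanSpace ℝ (Fin k)) : ∑ i, x i ^ 2 = ‖x‖ ^ 2 := by
  rw [EuclideanSpace.norm_eq, Real.sq_sqrt (Finset.sum_nonneg fun i _ => by positivity)]
  simp [Real.norm_eq_abs, sq_abs]

lemma q_one {k : ℕ} (x : EuclideanSpace ℝ (Fin k)) :
    (∑ i, ∑ j, x i * (1 : Matrix (Fin k) (Fin k) ℝ)⁻¹ i j * x j) = ‖x‖ ^ 2 := by
  rw [inv_one, ← norm_sq_sum]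
  congr 1; ext i
  simp [Matrix.one_apply, Finset.sum_ite_eq, sq]

lemma gaussDensity_one {k : ℕ} (x : EuclideanSpace ℝ (Fin k)) :
    gaussDensity k 1 x = (Real.sqrt ((2 * Real.pi) ^ k))⁻¹ * Real.exp (-(‖x‖ ^ 2) / 2) := by
  rw [gaussDensity, Matrix.det_one, mul_one, q_one]

lemma integrable_gauss_exp (k : ℕ) {b : ℝ} (hb : 0 < b) :
    Integrable (fun x : EuclideanSpace ℝ (Fin k) => Real.exp (-b * ‖x‖ ^ 2)) := by
  have h := (GaussianFourier.integrable_cexp_neg_mul_sq_norm_add (V := EuclideanSpace ℝ (Fin k))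
    (b := (b : ℂ)) (by simpa using hb) 0 0).norm
  refine h.congr (Filter.Eventually.of_forall fun x => ?_)
  simp [Complex.norm_exp]
  exact Or.inl (by rw [← Complex.ofReal_pow, Complex.ofReal_re])

lemma continuous_gaussDensity (k : ℕ) (S : Matrix (Fin k) (Fin k) ℝ) :
    Continuous (gaussDensity k S) := by
  unfold gaussDensity
  fun_prop

lemma q_bound {k : ℕ} {ε : ℝ} (hε0 : 0 ≤ ε) (hkε : (k : ℝ) * ε ≤ 1/2)
    (E : Matrix (Fin k) (Fin k) ℝ)
    (hE : ∀ i j, |E i j| ≤ ε) (hpos : (1 + E).PosDef)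
    (hD : ∀ i j, |((1 + E)⁻¹ - 1) i j| ≤ 2 * ε)
    (x : EuclideanSpace ℝ (Fin k)) :
    |(∑ i, ∑ j, x i * (1 + E)⁻¹ i j * x j) - ‖x‖ ^ 2| ≤ 2 * k * ε * ‖x‖ ^ 2 := by
  have hsplit : (∑ i, ∑ j, x i * (1 + E)⁻¹ i j * x j) - ‖x‖ ^ 2
      = ∑ i, ∑ j, x i * ((1 + E)⁻¹ - 1) i j * x j := by
    rw [← q_one x]
    rw [inv_one, ← Finset.sum_sub_distrib]
    refine Finset.sum_congr rfl fun i _ => ?_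
    rw [← Finset.sum_sub_distrib]
    refine Finset.sum_congr rfl fun j _ => ?_
    simp [Matrix.sub_apply]; ring
  rw [hsplit]
  calc |∑ i, ∑ j, x i * ((1 + E)⁻¹ - 1) i j * x j|
      ≤ ∑ i, |∑ j, x i * ((1 + E)⁻¹ - 1) i j * x j| := Finset.abs_sum_le_sum_abs _ _
    _ ≤ ∑ i, ∑ j, |x i * ((1 + E)⁻¹ - 1) i j * x j| :=
        Finset.sum_le_sum fun i _ => Finset.abs_sum_le_sum_abs _ _
    _ ≤ ∑ i, ∑ j, |x i| * (2 * ε) * |x j| := by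
        refine Finset.sum_le_sum fun i _ => Finset.sum_le_sum fun j _ => ?_
        rw [abs_mul, abs_mul]
        refine mul_le_mul_of_nonneg_right (mul_le_mul_of_nonneg_left (hD i j) (abs_nonneg _))
          (abs_nonneg _)
    _ = 2 * ε * (∑ i, |x i|) ^ 2 := by
        rw [sq, Finset.sum_mul_sum, Finset.mul_sum]
        refine Finset.sum_congr rfl fun i _ => ?_
        rw [Finset.mul_sum]
        exact Finset.sum_congr rfl fun j _ => by ring
    _ ≤ 2 * ε * ((k : ℝ) * ∑ i, |x i| ^ 2) := by
        refine mul_le_mul_of_nonneg_left ?_ (by positivity)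
        have := sq_sum_le_card_mul_sum_sq (s := (Finset.univ : Finset (Fin k)))
          (f := fun i => |x i|)
        simpa using this
    _ = 2 * k * ε * ‖x‖ ^ 2 := by
        rw [← norm_sq_sum]
        simp [sq_abs]
        ring


lemma aux_exp_sub (a b m : ℝ) (ha : m ≤ a) (hb : m ≤ b) :
    |Real.exp (-a) - Real.exp (-b)| ≤ |a - b| * Real.exp (-m) := by
  wlog h : b ≤ a generalizing a b
  · rw [abs_sub_comm, abs_sub_comm a b]; exact this b a hb ha (le_of_not_ge h)
  have h1 : Real.exp (-a) ≤ Real.exp (-b) := Real.exp_le_exp.2 (by linarith)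
  rw [abs_sub_comm, abs_of_nonneg (by linarith), abs_of_nonneg (by linarith : (0:ℝ) ≤ a - b)]
  have key : Real.exp (-b) - Real.exp (-a) = Real.exp (-b) * (1 - Real.exp (-(a-b))) := by
    rw [mul_sub, mul_one, ← Real.exp_add]; ring_nf
  rw [key]
  have h2 : 1 - Real.exp (-(a-b)) ≤ a - b := by
    have := Real.add_one_le_exp (-(a-b))
    nlinarith [Real.exp_pos (-(a-b))]
  have h3 : Real.exp (-b) ≤ Real.exp (-m) := Real.exp_le_exp.2 (by linarith)
  have h4 : 0 ≤ 1 - Real.exp (-(a-b)) := by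
    have : Real.exp (-(a-b)) ≤ 1 := Real.exp_le_one_iff.2 (by linarith)
    linarith
  calc Real.exp (-b) * (1 - Real.exp (-(a-b))) ≤ Real.exp (-m) * (a - b) :=
        mul_le_mul h3 h2 h4 (Real.exp_pos _).le
    _ = (a - b) * Real.exp (-m) := mul_comm _ _

lemma det_one_add_bound {k : ℕ} (E : Matrix (Fin k) (Fin k) ℝ) (hdiag : ∀ i, E i i = 0)
    {ε : ℝ} (hε0 : 0 ≤ ε) (hε1 : ε ≤ 1) (hE : ∀ i j, |E i j| ≤ ε) :
    |(1 + E).det - 1| ≤ (k.factorial : ℝ) * ε := by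
  have hone : ∀ i : Fin k, (1 + E) i i = 1 := by
    intro i; simp [Matrix.add_apply, hdiag i]
  have hoff : ∀ i j : Fin k, i ≠ j → (1 + E) i j = E i j := by
    intro i j hij; simp [Matrix.add_apply, Matrix.one_apply_ne hij]
  rw [Matrix.det_apply]
  have hid : ((Equiv.Perm.sign (1 : Equiv.Perm (Fin k))) •
      ∏ i, (1 + E) ((1 : Equiv.Perm (Fin k)) i) i) = 1 := by
    simp [hone]
  rw [← Finset.sum_erase_add Finset.univ _ (Finset.mem_univ (1 : Equiv.Perm (Fin k))), hid,
    add_sub_cancel_right]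
  calc |∑ σ ∈ Finset.univ.erase (1 : Equiv.Perm (Fin k)),
          (Equiv.Perm.sign σ) • ∏ i, (1 + E) (σ i) i|
      ≤ ∑ σ ∈ Finset.univ.erase (1 : Equiv.Perm (Fin k)),
          |(Equiv.Perm.sign σ) • ∏ i, (1 + E) (σ i) i| := Finset.abs_sum_le_sum_abs _ _
    _ ≤ ∑ _σ ∈ Finset.univ.erase (1 : Equiv.Perm (Fin k)), ε := by
        apply Finset.sum_le_sum
        intro σ hσ
        have hσ1 : σ ≠ 1 := (Finset.mem_erase.1 hσ).1
        obtain ⟨i₀, hi₀⟩ : ∃ i, σ i ≠ i := by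
          by_contra h; push_neg at h; exact hσ1 (Equiv.ext h)
        have habs : |(Equiv.Perm.sign σ) • ∏ i, (1 + E) (σ i) i|
            = |∏ i, (1 + E) (σ i) i| := by
          rcases Int.units_eq_one_or (Equiv.Perm.sign σ) with h | h <;> simp [h]
        rw [habs, Finset.abs_prod]
        calc ∏ i, |(1 + E) (σ i) i| ≤ ∏ i, (if i = i₀ then ε else 1) := by
              apply Finset.prod_le_prod (fun i _ => abs_nonneg _)
              intro i _
              by_cases hii : i = i₀
              · subst hii
                rw [hoff _ _ hi₀, if_pos rfl]; exact hE _ _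
              · rw [if_neg hii]
                by_cases hfix : σ i = i
                · rw [hfix, hone]; simp
                · rw [hoff _ _ hfix]; exact (hE _ _).trans hε1
          _ = ε := by simp
    _ ≤ (k.factorial : ℝ) * ε := by
        rw [Finset.sum_const, nsmul_eq_mul]
        apply mul_le_mul_of_nonneg_right _ hε0
        have := Finset.card_erase_le (a := (1 : Equiv.Perm (Fin k))) (s := Finset.univ)
        have hcard : (Finset.univ : Finset (Equiv.Perm (Fin k))).card = k.factorial := by
          simp [Fintype.card_perm]
        exact_mod_cast hcard ▸ this

lemma inv_entry_bound {k : ℕ} (E : Matrix (Fin k) (Fin k) ℝ) {ε : ℝ} (hε0 : 0 ≤ ε)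
    (hkε : (k : ℝ) * ε ≤ 1/2) (hE : ∀ i j, |E i j| ≤ ε) (hpos : (1 + E).PosDef) :
    ∀ i j, |((1 + E)⁻¹ - 1) i j| ≤ 2 * ε := by
  intro i j
  have hdet : IsUnit (1 + E).det := isUnit_iff_ne_zero.2 (ne_of_gt hpos.det_pos)
  set S := (1 + E)⁻¹ with hSdef
  set D := S - 1 with hDdef
  have h1 : S + E * S = 1 := by
    have := Matrix.mul_nonsing_inv (1 + E) hdet
    rwa [add_mul, one_mul] at this
  have h4 : E * S = 1 - S := eq_sub_of_add_eq' h1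
  have key : D = -E - E * D := by
    rw [hDdef, Matrix.mul_sub, Matrix.mul_one, h4]; abel
  have hentry : ∀ a b : Fin k, D a b = -E a b - ∑ m, E a m * D m b := by
    intro a b
    conv_lhs => rw [key]
    simp [Matrix.sub_apply, Matrix.neg_apply, Matrix.mul_apply]
  have hnonempty : Nonempty (Fin k × Fin k) := ⟨(i, j)⟩
  obtain ⟨p, hp⟩ := Finite.exists_max (fun p : Fin k × Fin k => |D p.1 p.2|)
  set M := |D p.1 p.2| with hMdef
  have hM : ∀ a b : Fin k, |D a b| ≤ M := fun a b => hp (a, b)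
  have hM0 : 0 ≤ M := abs_nonneg _
  have hMle : M ≤ ε + (k : ℝ) * ε * M := by
    rw [hMdef]
    calc |D p.1 p.2| = |-E p.1 p.2 - ∑ m, E p.1 m * D m p.2| := by rw [hentry]
      _ ≤ |E p.1 p.2| + |∑ m, E p.1 m * D m p.2| := by
          rw [← abs_neg (E p.1 p.2)] ; exact abs_sub _ _
      _ ≤ ε + ∑ m, |E p.1 m * D m p.2| :=
          add_le_add (hE _ _) (Finset.abs_sum_le_sum_abs _ _)
      _ ≤ ε + ∑ _m : Fin k, ε * M := by
          refine add_le_add le_rfl (Finset.sum_le_sum fun m _ => ?_)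
          rw [abs_mul]
          exact mul_le_mul (hE _ _) (hM _ _) (abs_nonneg _) hε0
      _ = ε + (k : ℝ) * ε * M := by
          rw [Finset.sum_const, nsmul_eq_mul]; simp [mul_assoc]
  have hM2 : M ≤ 2 * ε := by nlinarith
  exact (hM i j).trans hM2
set_option maxHeartbeats 1000000 in
lemma gauss_pointwise {k : ℕ} {ε : ℝ} (hε0 : 0 < ε) (hε1 : ε ≤ 1)
    (hkε : (k : ℝ) * ε ≤ 1/4) (hfε : (k.factorial : ℝ) * ε ≤ 1/2)
    (E : Matrix (Fin k) (Fin k) ℝ) (hdiag : ∀ i, E i i = 0)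
    (hE : ∀ i j, |E i j| ≤ ε) (hpos : (1 + E).PosDef)
    (x : EuclideanSpace ℝ (Fin k)) :
    |gaussDensity k (1 + E) x - gaussDensity k 1 x| ≤
      ε * ((2 * k.factorial + 8 * k) * (Real.sqrt ((2 * Real.pi) ^ k))⁻¹ *
        Real.exp (-(‖x‖ ^ 2) / 8)) := by
  have hD := inv_entry_bound E hε0.le (by linarith) hE hpos
  have hdet := det_one_add_bound E hdiag hε0.le hε1 hE
  have hq' := q_bound hε0.le (by linarith) E hE hpos hD x
  have hP : 0 < (2 * Real.pi) ^ k := by positivity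
  rw [gaussDensity, gaussDensity_one, Real.sqrt_mul hP.le, mul_inv]
  set aI := (Real.sqrt ((2 * Real.pi) ^ k))⁻¹ with haIdef
  set s := Real.sqrt (1 + E).det with hsdef
  set q := ∑ i, ∑ j, x i * (1 + E)⁻¹ i j * x j with hqdef
  set B := ‖x‖ ^ 2 with hBdef
  have hB0 : 0 ≤ B := sq_nonneg _
  have haI : 0 < aI := inv_pos.2 (Real.sqrt_pos.2 hP)
  -- determinant facts
  have hd1 : |(1 + E).det - 1| ≤ 1/2 := hdet.trans hfε
  have hd2 : 1/2 ≤ (1 + E).det := by have := abs_le.1 hd1; linarith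
  have hs12 : 1/2 ≤ s := by
    rw [hsdef]
    nlinarith [Real.sq_sqrt (by linarith : (0:ℝ) ≤ (1 + E).det),
      Real.sqrt_nonneg (1 + E).det]
  have hs2 : s ^ 2 = (1 + E).det := Real.sq_sqrt (by linarith)
  -- quadratic form facts
  have hqB : B/2 ≤ q := by
    have h1 := abs_le.1 hq'
    have h2 : 2 * (k : ℝ) * ε * B ≤ B/2 := by nlinarith [Nat.cast_nonneg (α := ℝ) k]
    linarith [h1.1]
  -- piece 1
  have e1 : |aI * s⁻¹ - aI| ≤ 2 * (k.factorial : ℝ) * ε * aI := by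
    have hsne : s ≠ 0 := by linarith
    have hinv : aI * s⁻¹ - aI = aI * ((1 - s) * s⁻¹) := by field_simp
    rw [hinv, abs_mul, abs_of_pos haI, abs_mul, abs_of_pos (by positivity : (0:ℝ) < s⁻¹)]
    have h1s : |1 - s| ≤ |1 - (1 + E).det| := by
      have h15 : (1:ℝ) ≤ |1 + s| := by rw [abs_of_nonneg (by linarith)]; linarith
      calc |1 - s| = |1 - s| * 1 := (mul_one _).symm
        _ ≤ |1 - s| * |1 + s| := mul_le_mul_of_nonneg_left h15 (abs_nonneg _)
        _ = |1 - (1 + E).det| := by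
            rw [← abs_mul, show (1 - s) * (1 + s) = 1 - (1 + E).det by nlinarith [hs2]]
    have hsinv : s⁻¹ ≤ 2 := by
      rw [inv_le_comm₀ (by linarith) (by norm_num)]; linarith
    have h1d : |1 - (1 + E).det| ≤ (k.factorial : ℝ) * ε := by
      rw [abs_sub_comm]; exact hdet
    calc aI * (|1 - s| * s⁻¹) ≤ aI * (((k.factorial : ℝ) * ε) * 2) := by
          refine mul_le_mul_of_nonneg_left ?_ haI.le
          exact mul_le_mul (h1s.trans h1d) hsinv (by positivity) (by positivity)
      _ = 2 * (k.factorial : ℝ) * ε * aI := by ring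
  have e2 : |Real.exp (-q/2)| ≤ Real.exp (-B/8) := by
    rw [abs_of_pos (Real.exp_pos _)]
    exact Real.exp_le_exp.2 (by linarith)
  have t1 : |aI * s⁻¹ - aI| * |Real.exp (-q/2)| ≤
      2 * (k.factorial : ℝ) * ε * aI * Real.exp (-B/8) :=
    mul_le_mul e1 e2 (abs_nonneg _) (by positivity)
  -- piece 2
  have e4 : |Real.exp (-(q/2)) - Real.exp (-(B/2))| ≤
      ((k : ℝ) * ε * B) * Real.exp (-(B/4)) := by
    have := aux_exp_sub (q/2) (B/2) (B/4) (by linarith) (by linarith)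
    refine this.trans ?_
    refine mul_le_mul_of_nonneg_right ?_ (Real.exp_pos _).le
    calc |q/2 - B/2| = |q - B| / 2 := by
          rw [show q/2 - B/2 = (q - B)/2 by ring, abs_div]
          norm_num
      _ ≤ (2 * k * ε * B) / 2 := by linarith [hq']
      _ = (k : ℝ) * ε * B := by ring
  have e5 : B * Real.exp (-(B/4)) ≤ 8 * Real.exp (-B/8) := by
    have h1 : B ≤ 8 * Real.exp (B/8) := by linarith [Real.add_one_le_exp (B/8), Real.exp_pos (B/8)]
    calc B * Real.exp (-(B/4)) ≤ (8 * Real.exp (B/8)) * Real.exp (-(B/4)) :=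
          mul_le_mul_of_nonneg_right h1 (Real.exp_pos _).le
      _ = 8 * Real.exp (-B/8) := by rw [mul_assoc, ← Real.exp_add]; ring_nf
  have t2 : |aI| * |Real.exp (-q/2) - Real.exp (-B/2)| ≤
      aI * (8 * (k : ℝ) * ε * Real.exp (-B/8)) := by
    rw [abs_of_pos haI]
    refine mul_le_mul_of_nonneg_left ?_ haI.le
    have h6 : |Real.exp (-q/2) - Real.exp (-B/2)| ≤ ((k : ℝ) * ε * B) * Real.exp (-(B/4)) := by
      have : -q/2 = -(q/2) := by ring
      rw [this, show -B/2 = -(B/2) by ring]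
      exact e4
    refine h6.trans ?_
    have hkε0 : 0 ≤ (k : ℝ) * ε := mul_nonneg (Nat.cast_nonneg k) hε0.le
    calc ((k : ℝ) * ε * B) * Real.exp (-(B/4)) = ((k : ℝ) * ε) * (B * Real.exp (-(B/4))) := by ring
      _ ≤ ((k : ℝ) * ε) * (8 * Real.exp (-B/8)) := mul_le_mul_of_nonneg_left e5 hkε0
      _ = 8 * (k : ℝ) * ε * Real.exp (-B/8) := by ring
  -- combine
  have split : aI * s⁻¹ * Real.exp (-q/2) - aI * Real.exp (-B/2) =
      (aI * s⁻¹ - aI) * Real.exp (-q/2) + aI * (Real.exp (-q/2) - Real.exp (-B/2)) := by ring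
  rw [split]
  refine (abs_add_le _ _).trans ?_
  rw [abs_mul, abs_mul]
  have final : ε * ((2 * (k.factorial : ℝ) + 8 * (k : ℝ)) * aI * Real.exp (-B/8)) =
      2 * (k.factorial : ℝ) * ε * aI * Real.exp (-B/8) +
        aI * (8 * (k : ℝ) * ε * Real.exp (-B/8)) := by ring
  push_cast
  push_cast at final
  linarith [t1, t2]


set_option maxHeartbeats 1000000 in
/-- Comparison of the centered Gaussian with covariance `I + E` (where `E` has zero
diagonal and entries of absolute value at most `ε`) with the standard Gaussian:
over every measurable convex set the probabilities differ by `O(ε)` as `ε → 0`,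
with constant depending only on `k`. -/
theorem gaussian_near_identity_comparison (k : ℕ) :
    ∃ C > (0 : ℝ), ∃ ε₀ > (0 : ℝ), ∀ ε : ℝ, 0 < ε → ε ≤ ε₀ →
      ∀ E : Matrix (Fin k) (Fin k) ℝ, Eᵀ = E → (∀ i, E i i = 0) →
        (∀ i j, |E i j| ≤ ε) → (1 + E).PosDef →
        ∀ Y : Set (EuclideanSpace ℝ (Fin k)), MeasurableSet Y → Convex ℝ Y →
          |(∫ x in Y, gaussDensity k (1 + E) x) - ∫ x in Y, gaussDensity k 1 x| ≤ C * ε := by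
  classical
  have hP : 0 < (2 * Real.pi) ^ k := by positivity
  set aI := (Real.sqrt ((2 * Real.pi) ^ k))⁻¹ with haIdef
  have haI : 0 < aI := inv_pos.2 (Real.sqrt_pos.2 hP)
  have hgint : Integrable (fun x : EuclideanSpace ℝ (Fin k) => Real.exp (-(‖x‖ ^ 2) / 8)) := by
    refine (integrable_gauss_exp k (by norm_num : (0:ℝ) < 1/8)).congr
      (Filter.Eventually.of_forall fun x => ?_)
    show Real.exp (-(1/8 : ℝ) * ‖x‖ ^ 2) = Real.exp (-(‖x‖ ^ 2) / 8)
    rw [show -(1/8 : ℝ) * ‖x‖ ^ 2 = -(‖x‖ ^ 2) / 8 from by ring]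
  have hgnonneg : 0 ≤ ∫ x : EuclideanSpace ℝ (Fin k), Real.exp (-(‖x‖ ^ 2) / 8) :=
    integral_nonneg fun x => (Real.exp_pos _).le
  set Cb := (2 * (k.factorial : ℝ) + 8 * k) * aI with hCbdef
  have hCb0 : 0 < Cb := by positivity
  set IG := ∫ x : EuclideanSpace ℝ (Fin k), Real.exp (-(‖x‖ ^ 2) / 8) with hIGdef
  refine ⟨Cb * IG + 1, by positivity, (4 * ((k.factorial : ℝ) + k + 1))⁻¹, by positivity, ?_⟩
  intro ε hε hε₀ E _hsym hdiag hE hpos Y hYmeas _hYconv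
  -- epsilon smallness facts
  have hfk : (1 : ℝ) ≤ k.factorial := Nat.one_le_cast.2 k.factorial_pos
  have hk0 : (0 : ℝ) ≤ k := Nat.cast_nonneg k
  have hT : (0:ℝ) < 4 * ((k.factorial : ℝ) + k + 1) := by linarith
  have hεT : ε * (4 * ((k.factorial : ℝ) + k + 1)) ≤ 1 := by
    calc ε * (4 * ((k.factorial : ℝ) + k + 1))
        ≤ (4 * ((k.factorial : ℝ) + k + 1))⁻¹ * (4 * ((k.factorial : ℝ) + k + 1)) :=
          mul_le_mul_of_nonneg_right hε₀ hT.le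
      _ = 1 := inv_mul_cancel₀ hT.ne'
  have hε1 : ε ≤ 1 := by nlinarith
  have hkε : (k : ℝ) * ε ≤ 1/4 := by nlinarith
  have hfε : (k.factorial : ℝ) * ε ≤ 1/2 := by nlinarith
  -- pointwise bound
  have hpw := fun x => gauss_pointwise hε hε1 hkε hfε E hdiag hE hpos x
  -- integrability of the densities
  have hint1 : Integrable (gaussDensity k 1) := by
    have heq : gaussDensity k 1 = fun x => aI * Real.exp (-(1/2 : ℝ) * ‖x‖ ^ 2) :=
      funext fun x => by rw [gaussDensity_one]; congr 1; ring
    rw [heq]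
    exact (integrable_gauss_exp k (by norm_num)).const_mul _
  have hD := inv_entry_bound E hε.le (by linarith) hE hpos
  have hdet := det_one_add_bound E hdiag hε.le hε1 hE
  have hd2 : 1/2 ≤ (1 + E).det := by
    have := abs_le.1 (hdet.trans hfε); linarith
  have hintS : Integrable (gaussDensity k (1 + E)) := by
    refine Integrable.mono' ((integrable_gauss_exp k (by norm_num : (0:ℝ) < 1/4)).const_mul
      (2 * aI)) (continuous_gaussDensity k _).aestronglyMeasurable (ae_of_all _ fun x => ?_)
    have hq' := q_bound hε.le (by linarith) E hE hpos hD x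
    have hB0 : (0:ℝ) ≤ ‖x‖ ^ 2 := sq_nonneg _
    have hqB : ‖x‖ ^ 2 / 2 ≤ ∑ i, ∑ j, x i * (1 + E)⁻¹ i j * x j := by
      have h1 := (abs_le.1 hq').1
      have h2 : 2 * (k : ℝ) * ε * ‖x‖ ^ 2 ≤ ‖x‖ ^ 2 / 2 := by nlinarith
      linarith
    have hs12 : 1/2 ≤ Real.sqrt (1 + E).det := by
      nlinarith [Real.sq_sqrt (by linarith : (0:ℝ) ≤ (1 + E).det),
        Real.sqrt_nonneg (1 + E).det]
    have hcoef : (Real.sqrt ((2 * Real.pi) ^ k * (1 + E).det))⁻¹ ≤ 2 * aI := by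
      rw [Real.sqrt_mul hP.le, mul_inv]
      have : (Real.sqrt (1 + E).det)⁻¹ ≤ 2 := by
        rw [inv_le_comm₀ (by linarith) (by norm_num)]; linarith
      calc aI * (Real.sqrt (1 + E).det)⁻¹ ≤ aI * 2 :=
            mul_le_mul_of_nonneg_left this haI.le
        _ = 2 * aI := by ring
    rw [Real.norm_eq_abs, gaussDensity, abs_mul,
      abs_of_nonneg (by positivity : (0:ℝ) ≤ (Real.sqrt ((2 * Real.pi) ^ k * (1 + E).det))⁻¹),
      abs_of_pos (Real.exp_pos _)]
    calc (Real.sqrt ((2 * Real.pi) ^ k * (1 + E).det))⁻¹ *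
          Real.exp (-(∑ i, ∑ j, x i * (1 + E)⁻¹ i j * x j) / 2)
        ≤ (2 * aI) * Real.exp (-(1/4 : ℝ) * ‖x‖ ^ 2) := by
          refine mul_le_mul hcoef (Real.exp_le_exp.2 (by linarith)) (Real.exp_pos _).le
            (by positivity)
      _ = 2 * aI * Real.exp (-(1/4 : ℝ) * ‖x‖ ^ 2) := by ring
  -- assemble
  have hsub : (∫ x in Y, gaussDensity k (1 + E) x) - ∫ x in Y, gaussDensity k 1 x
      = ∫ x in Y, (gaussDensity k (1 + E) x - gaussDensity k 1 x) :=
    (integral_sub hintS.integrableOn hint1.integrableOn).symm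
  rw [hsub]
  have habs : |∫ x in Y, (gaussDensity k (1 + E) x - gaussDensity k 1 x)|
      ≤ ∫ x in Y, |gaussDensity k (1 + E) x - gaussDensity k 1 x| := by
    simpa [Real.norm_eq_abs] using
      norm_integral_le_integral_norm (μ := volume.restrict Y)
        (fun x => gaussDensity k (1 + E) x - gaussDensity k 1 x)
  refine habs.trans ?_
  have hmono : (∫ x in Y, |gaussDensity k (1 + E) x - gaussDensity k 1 x|)
      ≤ ∫ x in Y, ε * (Cb * Real.exp (-(‖x‖ ^ 2) / 8)) := by
    refine setIntegral_mono_on ((hintS.sub hint1).abs.integrableOn)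
      (((hgint.const_mul Cb).const_mul ε).integrableOn) hYmeas fun x _ => ?_
    have := hpw x
    calc |gaussDensity k (1 + E) x - gaussDensity k 1 x|
        ≤ ε * ((2 * k.factorial + 8 * k) * aI * Real.exp (-(‖x‖ ^ 2) / 8)) := this
      _ = ε * (Cb * Real.exp (-(‖x‖ ^ 2) / 8)) := by rw [hCbdef]
  refine hmono.trans ?_
  have hpull : (∫ x in Y, ε * (Cb * Real.exp (-(‖x‖ ^ 2) / 8)))
      = ε * Cb * ∫ x in Y, Real.exp (-(‖x‖ ^ 2) / 8) := by
    rw [← integral_const_mul]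
    congr 1; ext x; ring
  rw [hpull]
  have hYle : (∫ x in Y, Real.exp (-(‖x‖ ^ 2) / 8)) ≤ IG :=
    setIntegral_le_integral hgint (ae_of_all _ fun x => (Real.exp_pos _).le)
  calc ε * Cb * ∫ x in Y, Real.exp (-(‖x‖ ^ 2) / 8)
      ≤ ε * Cb * IG := mul_le_mul_of_nonneg_left hYle (by positivity)
    _ ≤ (Cb * IG + 1) * ε := by nlinarith
end
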